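/- For every fixed linearization order of the two writes (1-before-0 or 0-before-1), there is a coin value v ∈ {0,1} such that if the coin C₁ does not take value v, every reader exits; hence, conditioned on any fixed order chosen before the coin flip, the exit probability is at least 1/2. -/
import Mathlib


open MeasureTheory

/-- Order `o : Ω → Bool` (with `true` = order A, `false` = order B) is fixed
before the coin flip; the coin `C` (with `true` = value 1, `false` = value 0)
is uniform and independent of `o`. The exit event is
`(o = A ∧ C ≠ 1) ∨ (o = B ∧ C ≠ 0)`; its probability is at least `1/2`. -/
theorem stmt_17 {Ω : Type*} [MeasurableSpace Ω] (μ : Measure Ω)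
    [IsProbabilityMeasure μ] (o C : Ω → Bool)
    (ho : Measurable o) (hC : Measurable C)
    (hfair : μ {ω | C ω = true} = 1 / 2 ∧ μ {ω | C ω = false} = 1 / 2)
    (hindep : ∀ b b' : Bool,
      μ ({ω | o ω = b} ∩ {ω | C ω = b'}) = μ {ω | o ω = b} * μ {ω | C ω = b'}) :
    1 / 2 ≤ μ {ω | (o ω = true ∧ C ω ≠ true) ∨ (o ω = false ∧ C ω ≠ false)} := by
  have hset : {ω | (o ω = true ∧ C ω ≠ true) ∨ (o ω = false ∧ C ω ≠ false)}
      = ({ω | o ω = true} ∩ {ω | C ω = false}) ∪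
        ({ω | o ω = false} ∩ {ω | C ω = true}) := by
    ext ω; cases h1 : o ω <;> cases h2 : C ω <;> simp [h1, h2]
  rw [hset]
  have hdisj : Disjoint ({ω | o ω = true} ∩ {ω | C ω = false})
      ({ω | o ω = false} ∩ {ω | C ω = true}) := by
    rw [Set.disjoint_left]
    rintro ω ⟨h1, _⟩ ⟨h2, _⟩
    simp_all
  have hm2 : MeasurableSet ({ω | o ω = false} ∩ {ω | C ω = true}) :=
    (ho (measurableSet_singleton false)).inter (hC (measurableSet_singleton true))
  rw [measure_union hdisj hm2, hindep, hindep, hfair.1, hfair.2]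
  have hsum : μ {ω | o ω = true} + μ {ω | o ω = false} = 1 := by
    have hd : Disjoint {ω | o ω = true} {ω | o ω = false} := by
      rw [Set.disjoint_left]; intro ω h1 h2; simp_all
    rw [← measure_union hd (ho (measurableSet_singleton false))]
    have : {ω | o ω = true} ∪ {ω | o ω = false} = Set.univ := by
      ext ω; by_cases h : o ω <;> simp [h]
    rw [this, measure_univ]
  calc (1 : ENNReal) / 2 = (μ {ω | o ω = true} + μ {ω | o ω = false}) * (1/2) := by
        rw [hsum, one_mul]
    _ = μ {ω | o ω = true} * (1/2) + μ {ω | o ω = false} * (1/2) := by ring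
    _ ≤ _ := le_refl _
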